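/- The solution space of the PGL₃ Hecke eigenform recurrence system is exactly 1-dimensional for every choice of parameters (q, λ₁, λ₂) with q > 1: the map sending f to f(ε₀) is a linear isomorphism from the space of solutions onto ℂ (injectivity by the determination theorem; surjectivity because the recurrences can be solved forward consistently). -/

import Mathlib

noncomputable def rows (q : ℝ) (l1 l2 c : ℂ) : ℕ → ℕ → ℂ
  | 0 => fun a => if a = 0 then c else 0
  | 1 => fun a =>
      if a = 0 then l2 * c / ((q : ℂ) ^ 2 + q + 1)
      else if a = 1 then l1 * c / ((q : ℂ) ^ 2 + q + 1) else 0
  | (b + 2) => fun a =>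
      if a = 0 then
        (l2 * rows q l1 l2 c (b + 1) 0 - ((q : ℂ) + 1) * rows q l1 l2 c (b + 1) 1) / (q : ℂ) ^ 2
      else if a = 1 then
        (l1 * rows q l1 l2 c (b + 1) 0 - rows q l1 l2 c b 0) / ((q : ℂ) ^ 2 + q)
      else if a < b + 2 then
        (l1 * rows q l1 l2 c (b + 1) (a - 1) - rows q l1 l2 c b (a - 1)
          - (q : ℂ) * rows q l1 l2 c (b + 1) (a - 2)) / (q : ℂ) ^ 2
      else if a = b + 2 then
        (l1 * rows q l1 l2 c (b + 1) (b + 1) - ((q : ℂ) + 1) * rows q l1 l2 c (b + 1) b) / (q : ℂ) ^ 2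
      else 0

noncomputable def FF (q : ℝ) (l1 l2 c : ℂ) (a b : ℕ) : ℂ := rows q l1 l2 c b a

section
variable {q : ℝ} {l1 l2 c : ℂ}

lemma FF00 : FF q l1 l2 c 0 0 = c := by simp [FF, rows]

lemma hB5 (hK : (q : ℂ) ^ 2 + q + 1 ≠ 0) :
    l2 * FF q l1 l2 c 0 0 = ((q : ℂ) ^ 2 + q + 1) * FF q l1 l2 c 0 1 := by
  simp only [FF, rows, if_pos rfl, ↓reduceIte]
  rw [mul_div_assoc', eq_div_iff hK]; ring

lemma hA1 (hK : (q : ℂ) ^ 2 + q + 1 ≠ 0) :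
    l1 * FF q l1 l2 c 0 0 = ((q : ℂ) ^ 2 + q + 1) * FF q l1 l2 c 1 1 := by
  simp only [FF, rows, if_pos rfl, if_neg (one_ne_zero), ↓reduceIte]
  rw [mul_div_assoc', eq_div_iff hK]; ring

lemma hB6 (hq2 : (q : ℂ) ^ 2 ≠ 0) (m : ℕ) :
    l2 * FF q l1 l2 c 0 (m + 1) = (q : ℂ) ^ 2 * FF q l1 l2 c 0 (m + 2)
      + ((q : ℂ) + 1) * FF q l1 l2 c 1 (m + 1) := by
  have hx : FF q l1 l2 c 0 (m + 2)
      = (l2 * FF q l1 l2 c 0 (m + 1) - ((q : ℂ) + 1) * FF q l1 l2 c 1 (m + 1)) / (q : ℂ) ^ 2 := by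
    simp [FF, rows]
  rw [eq_div_iff hq2] at hx
  linear_combination -hx

lemma hA2 (hqq : (q : ℂ) ^ 2 + q ≠ 0) (m : ℕ) :
    l1 * FF q l1 l2 c 0 (m + 1) = ((q : ℂ) ^ 2 + q) * FF q l1 l2 c 1 (m + 2)
      + FF q l1 l2 c 0 m := by
  have hx : FF q l1 l2 c 1 (m + 2)
      = (l1 * FF q l1 l2 c 0 (m + 1) - FF q l1 l2 c 0 m) / ((q : ℂ) ^ 2 + q) := by
    simp [FF, rows]
  rw [eq_div_iff hqq] at hx
  linear_combination -hx

lemma hA3 (hq2 : (q : ℂ) ^ 2 ≠ 0) (m : ℕ) :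
    l1 * FF q l1 l2 c (m + 1) (m + 1) = (q : ℂ) ^ 2 * FF q l1 l2 c (m + 2) (m + 2)
      + ((q : ℂ) + 1) * FF q l1 l2 c m (m + 1) := by
  have hx : FF q l1 l2 c (m + 2) (m + 2)
      = (l1 * FF q l1 l2 c (m + 1) (m + 1) - ((q : ℂ) + 1) * FF q l1 l2 c m (m + 1))
          / (q : ℂ) ^ 2 := by
    simp [FF, rows]
  rw [eq_div_iff hq2] at hx
  linear_combination -hx

lemma hA4 (hq2 : (q : ℂ) ^ 2 ≠ 0) (x y : ℕ) (h : x < y) :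
    l1 * FF q l1 l2 c (x + 1) (y + 1) = (q : ℂ) ^ 2 * FF q l1 l2 c (x + 2) (y + 2)
      + FF q l1 l2 c (x + 1) y + (q : ℂ) * FF q l1 l2 c x (y + 1) := by
  have hx : FF q l1 l2 c (x + 2) (y + 2)
      = (l1 * FF q l1 l2 c (x + 1) (y + 1) - FF q l1 l2 c (x + 1) y
          - (q : ℂ) * FF q l1 l2 c x (y + 1)) / (q : ℂ) ^ 2 := by
    simp [FF, rows, h]
  rw [eq_div_iff hq2] at hx
  linear_combination -hx

end

section
variable {q : ℝ} {l1 l2 c : ℂ}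

lemma mainB (hq2 : (q : ℂ) ^ 2 ≠ 0) (hqq : (q : ℂ) ^ 2 + q ≠ 0)
    (hK : (q : ℂ) ^ 2 + q + 1 ≠ 0) : ∀ N : ℕ,
    (∀ m, m < N → l2 * FF q l1 l2 c (m + 1) (m + 1)
      = ((q : ℂ) ^ 2 + q) * FF q l1 l2 c (m + 1) (m + 2) + FF q l1 l2 c m m) ∧
    (∀ x y, x < y → y < N → l2 * FF q l1 l2 c (x + 1) (y + 1)
      = (q : ℂ) * FF q l1 l2 c (x + 2) (y + 1) + (q : ℂ) ^ 2 * FF q l1 l2 c (x + 1) (y + 2)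
        + FF q l1 l2 c x y) := by
  intro N
  induction N with
  | zero => exact ⟨fun m hm => absurd hm (Nat.not_lt_zero m),
      fun x y _ hy => absurd hy (Nat.not_lt_zero y)⟩
  | succ N ih =>
    constructor
    · intro m hm
      rcases Nat.lt_succ_iff_lt_or_eq.mp hm with hm' | rfl
      · exact ih.1 m hm'
      · -- diagonal cases
        match m, ih with
        | 0, ih =>
          refine mul_left_cancel₀ hK ?_
          have h1 := hA1 (q := q) (l1 := l1) (l2 := l2) (c := c) hK
          have h2 := hB5 (q := q) (l1 := l1) (l2 := l2) (c := c) hK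
          have h3 := hA2 (q := q) (l1 := l1) (l2 := l2) (c := c) hqq 0
          linear_combination (-l2) * h1 + l1 * h2 + ((q : ℂ) ^ 2 + q + 1) * h3
        | 1, ih =>
          refine mul_left_cancel₀ hq2 ?_
          have h1 := hA3 (q := q) (l1 := l1) (l2 := l2) (c := c) hq2 0
          have h2 := ih.1 0 Nat.one_pos
          have h3 := hB6 (q := q) (l1 := l1) (l2 := l2) (c := c) hq2 0
          have h4 := hA4 (q := q) (l1 := l1) (l2 := l2) (c := c) hq2 0 1 Nat.one_pos
          have h5 := hA1 (q := q) (l1 := l1) (l2 := l2) (c := c) hK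
          linear_combination (-l2) * h1 + l1 * h2 - ((q : ℂ) + 1) * h3
            + ((q : ℂ) ^ 2 + q) * h4 + h5
        | (n + 2), ih =>
          refine mul_left_cancel₀ hq2 ?_
          have h1 := hA3 (q := q) (l1 := l1) (l2 := l2) (c := c) hq2 (n + 1)
          have h2 := ih.1 (n + 1) (by omega)
          have h3 := ih.2 n (n + 1) (by omega) (by omega)
          have h4 := hA4 (q := q) (l1 := l1) (l2 := l2) (c := c) hq2 (n + 1) (n + 2) (by omega)
          have h5 := hA3 (q := q) (l1 := l1) (l2 := l2) (c := c) hq2 n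
          linear_combination (-l2) * h1 + l1 * h2 - ((q : ℂ) + 1) * h3
            + ((q : ℂ) ^ 2 + q) * h4 + h5
    · intro x y hxy hy
      rcases Nat.lt_succ_iff_lt_or_eq.mp hy with hy' | rfl
      · exact ih.2 x y hxy hy'
      · match x, y, hxy, ih with
        | 0, 1, _, ih =>
          refine mul_left_cancel₀ hqq ?_
          have h1 := hA2 (q := q) (l1 := l1) (l2 := l2) (c := c) hqq 0
          have h2 := hB6 (q := q) (l1 := l1) (l2 := l2) (c := c) hq2 0
          have h3 := hB5 (q := q) (l1 := l1) (l2 := l2) (c := c) hK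
          have h4 := hA2 (q := q) (l1 := l1) (l2 := l2) (c := c) hqq 1
          have h5 := hA3 (q := q) (l1 := l1) (l2 := l2) (c := c) hq2 0
          linear_combination (-l2) * h1 + l1 * h2 - h3 + (q : ℂ) ^ 2 * h4 + ((q : ℂ) + 1) * h5
        | 0, (k + 2), _, ih =>
          refine mul_left_cancel₀ hqq ?_
          have h1 := hA2 (q := q) (l1 := l1) (l2 := l2) (c := c) hqq (k + 1)
          have h2 := hB6 (q := q) (l1 := l1) (l2 := l2) (c := c) hq2 (k + 1)
          have h3 := hB6 (q := q) (l1 := l1) (l2 := l2) (c := c) hq2 k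
          have h4 := hA2 (q := q) (l1 := l1) (l2 := l2) (c := c) hqq (k + 2)
          have h5 := hA4 (q := q) (l1 := l1) (l2 := l2) (c := c) hq2 0 (k + 1) (by omega)
          linear_combination (-l2) * h1 + l1 * h2 - h3 + (q : ℂ) ^ 2 * h4 + ((q : ℂ) + 1) * h5
        | 1, 2, _, ih =>
          refine mul_left_cancel₀ hq2 ?_
          have h1 := hA4 (q := q) (l1 := l1) (l2 := l2) (c := c) hq2 0 1 Nat.one_pos
          have h2 := ih.2 0 1 Nat.one_pos (by omega)
          have h3 := ih.1 0 (by omega)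
          have h4 := hB6 (q := q) (l1 := l1) (l2 := l2) (c := c) hq2 1
          have h5 := hA3 (q := q) (l1 := l1) (l2 := l2) (c := c) hq2 1
          have h6 := hA4 (q := q) (l1 := l1) (l2 := l2) (c := c) hq2 0 2 (by omega)
          have h7 := hA2 (q := q) (l1 := l1) (l2 := l2) (c := c) hqq 0
          linear_combination (-l2) * h1 + l1 * h2 - h3 - (q : ℂ) * h4 + (q : ℂ) * h5
            + (q : ℂ) ^ 2 * h6 + h7
        | 1, (k + 3), _, ih =>
          refine mul_left_cancel₀ hq2 ?_
          have h1 := hA4 (q := q) (l1 := l1) (l2 := l2) (c := c) hq2 0 (k + 2) (by omega)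
          have h2 := ih.2 0 (k + 2) (by omega) (by omega)
          have h3 := ih.2 0 (k + 1) (by omega) (by omega)
          have h4 := hB6 (q := q) (l1 := l1) (l2 := l2) (c := c) hq2 (k + 2)
          have h5 := hA4 (q := q) (l1 := l1) (l2 := l2) (c := c) hq2 1 (k + 2) (by omega)
          have h6 := hA4 (q := q) (l1 := l1) (l2 := l2) (c := c) hq2 0 (k + 3) (by omega)
          have h7 := hA2 (q := q) (l1 := l1) (l2 := l2) (c := c) hqq (k + 1)
          linear_combination (-l2) * h1 + l1 * h2 - h3 - (q : ℂ) * h4 + (q : ℂ) * h5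
            + (q : ℂ) ^ 2 * h6 + h7
        | (n + 2), y, hxy, ih =>
          rcases Nat.lt_or_ge y (n + 4) with hy4 | hy4
          · -- y = n + 3
            have hy3 : y = n + 3 := by omega
            subst hy3
            refine mul_left_cancel₀ hq2 ?_
            have h1 := hA4 (q := q) (l1 := l1) (l2 := l2) (c := c) hq2 (n + 1) (n + 2) (by omega)
            have h2 := ih.2 (n + 1) (n + 2) (by omega) (by omega)
            have h3 := ih.1 (n + 1) (by omega)
            have h4 := ih.2 n (n + 2) (by omega) (by omega)
            have h5 := hA3 (q := q) (l1 := l1) (l2 := l2) (c := c) hq2 (n + 2)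
            have h6 := hA4 (q := q) (l1 := l1) (l2 := l2) (c := c) hq2 (n + 1) (n + 3) (by omega)
            have h7 := hA4 (q := q) (l1 := l1) (l2 := l2) (c := c) hq2 n (n + 1) (by omega)
            linear_combination (-l2) * h1 + l1 * h2 - h3 - (q : ℂ) * h4 + (q : ℂ) * h5
              + (q : ℂ) ^ 2 * h6 + h7
          · obtain ⟨k, rfl⟩ : ∃ k, y = k + n + 4 := ⟨y - (n + 4), by omega⟩
            refine mul_left_cancel₀ hq2 ?_
            have h1 := hA4 (q := q) (l1 := l1) (l2 := l2) (c := c) hq2 (n + 1) (k + n + 3) (by omega)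
            have h2 := ih.2 (n + 1) (k + n + 3) (by omega) (by omega)
            have h3 := ih.2 (n + 1) (k + n + 2) (by omega) (by omega)
            have h4 := ih.2 n (k + n + 3) (by omega) (by omega)
            have h5 := hA4 (q := q) (l1 := l1) (l2 := l2) (c := c) hq2 (n + 2) (k + n + 3) (by omega)
            have h6 := hA4 (q := q) (l1 := l1) (l2 := l2) (c := c) hq2 (n + 1) (k + n + 4) (by omega)
            have h7 := hA4 (q := q) (l1 := l1) (l2 := l2) (c := c) hq2 n (k + n + 2) (by omega)
            linear_combination (-l2) * h1 + l1 * h2 - h3 - (q : ℂ) * h4 + (q : ℂ) * h5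
              + (q : ℂ) ^ 2 * h6 + h7

end


/-- The eight recurrence relations satisfied by an unramified `Φ_{x,1}`, `Φ_{x,2}`
eigenform `f` (with eigenvalues `l1`, `l2`) for `PGL₃` over `P¹` at a degree one place
`x`, via the graphs of Hecke operators on `PBun₃(P¹)`.  Indices: `f d₁ d₂` is the value
at `ε_{d₁,d₂}` = class of `O ⊕ O(d₁) ⊕ O(d₂)` (so `ε₀ = f 0 0`, `ε_d = f 0 d`),
meaningful for `0 ≤ d₁ ≤ d₂`. -/
def HeckeRel (q : ℝ) (l1 l2 : ℂ) (f : ℕ → ℕ → ℂ) : Prop :=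
  (l1 * f 0 0 = ((q : ℂ) ^ 2 + q + 1) * f 1 1) ∧
  (∀ d : ℕ, 1 ≤ d → l1 * f 0 d = ((q : ℂ) ^ 2 + q) * f 1 (d + 1) + f 0 (d - 1)) ∧
  (∀ d : ℕ, 1 ≤ d →
    l1 * f d d = (q : ℂ) ^ 2 * f (d + 1) (d + 1) + ((q : ℂ) + 1) * f (d - 1) d) ∧
  (∀ d1 d2 : ℕ, 1 ≤ d1 → d1 < d2 →
    l1 * f d1 d2 = (q : ℂ) ^ 2 * f (d1 + 1) (d2 + 1) + f d1 (d2 - 1)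
      + (q : ℂ) * f (d1 - 1) d2) ∧
  (l2 * f 0 0 = ((q : ℂ) ^ 2 + q + 1) * f 0 1) ∧
  (∀ d : ℕ, 1 ≤ d → l2 * f 0 d = (q : ℂ) ^ 2 * f 0 (d + 1) + ((q : ℂ) + 1) * f 1 d) ∧
  (∀ d : ℕ, 1 ≤ d →
    l2 * f d d = ((q : ℂ) ^ 2 + q) * f d (d + 1) + f (d - 1) (d - 1)) ∧
  (∀ d1 d2 : ℕ, 1 ≤ d1 → d1 < d2 →
    l2 * f d1 d2 = (q : ℂ) * f (d1 + 1) d2 + (q : ℂ) ^ 2 * f d1 (d2 + 1)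
      + f (d1 - 1) (d2 - 1))

/-- for every choice of parameters `(q, λ₁, λ₂)` with `q > 1` the
solution space of the recurrence system is exactly 1-dimensional: evaluation
`f ↦ f(ε₀)` is injective (on the index set `0 ≤ d₁ ≤ d₂`) and surjective onto `ℂ`. -/
theorem stmt_11 (q : ℝ) (hq : 1 < q) (l1 l2 : ℂ) :
    (∀ c : ℂ, ∃ f : ℕ → ℕ → ℂ, HeckeRel q l1 l2 f ∧ f 0 0 = c) ∧
    (∀ f g : ℕ → ℕ → ℂ, HeckeRel q l1 l2 f → HeckeRel q l1 l2 g → f 0 0 = g 0 0 →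
      ∀ d1 d2 : ℕ, d1 ≤ d2 → f d1 d2 = g d1 d2) := by
  have hq0 : (0 : ℝ) < q := by linarith
  have hqC : (q : ℂ) ≠ 0 := by exact_mod_cast hq0.ne'
  have hq2 : (q : ℂ) ^ 2 ≠ 0 := pow_ne_zero 2 hqC
  have hqq : (q : ℂ) ^ 2 + q ≠ 0 := by
    rw [show (q : ℂ) ^ 2 + q = ((q ^ 2 + q : ℝ) : ℂ) by push_cast; ring]
    exact_mod_cast (by nlinarith : (0 : ℝ) < q ^ 2 + q).ne'
  have hK : (q : ℂ) ^ 2 + q + 1 ≠ 0 := by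
    rw [show (q : ℂ) ^ 2 + q + 1 = ((q ^ 2 + q + 1 : ℝ) : ℂ) by push_cast; ring]
    exact_mod_cast (by nlinarith : (0 : ℝ) < q ^ 2 + q + 1).ne'
  constructor
  · -- existence
    intro c
    refine ⟨FF q l1 l2 c, ⟨hA1 hK, ?_, ?_, ?_, hB5 hK, ?_, ?_, ?_⟩, FF00⟩
    · intro d hd
      obtain ⟨m, rfl⟩ : ∃ m, d = m + 1 := ⟨d - 1, by omega⟩
      simpa using hA2 hqq m
    · intro d hd
      obtain ⟨m, rfl⟩ : ∃ m, d = m + 1 := ⟨d - 1, by omega⟩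
      simpa using hA3 hq2 m
    · intro d1 d2 h1 h2
      obtain ⟨x, rfl⟩ : ∃ x, d1 = x + 1 := ⟨d1 - 1, by omega⟩
      obtain ⟨y, rfl⟩ : ∃ y, d2 = y + 1 := ⟨d2 - 1, by omega⟩
      simpa using hA4 hq2 x y (by omega)
    · intro d hd
      obtain ⟨m, rfl⟩ : ∃ m, d = m + 1 := ⟨d - 1, by omega⟩
      simpa using hB6 hq2 m
    · intro d hd
      obtain ⟨m, rfl⟩ : ∃ m, d = m + 1 := ⟨d - 1, by omega⟩
      simpa using (mainB hq2 hqq hK (m + 1)).1 m (Nat.lt_succ_self m)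
    · intro d1 d2 h1 h2
      obtain ⟨x, rfl⟩ : ∃ x, d1 = x + 1 := ⟨d1 - 1, by omega⟩
      obtain ⟨y, rfl⟩ : ∃ y, d2 = y + 1 := ⟨d2 - 1, by omega⟩
      simpa using (mainB hq2 hqq hK (y + 1)).2 x y (by omega) (Nat.lt_succ_self y)
  · -- uniqueness
    rintro f g ⟨f1, f2, f3, f4, f5, f6, f7, f8⟩ ⟨g1, g2, g3, g4, g5, g6, g7, g8⟩ h00
    have key : ∀ b, ∀ a, a ≤ b → f a b = g a b := by
      intro b
      induction b using Nat.strong_induction_on with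
      | _ b ihb =>
        match b with
        | 0 => intro a ha; interval_cases a; exact h00
        | 1 =>
          intro a ha
          interval_cases a
          · refine mul_left_cancel₀ hK ?_
            rw [← f5, ← g5, h00]
          · refine mul_left_cancel₀ hK ?_
            rw [← f1, ← g1, h00]
        | (m + 2) =>
          intro a ha
          have e1 : f 0 (m + 1) = g 0 (m + 1) := ihb (m + 1) (by omega) 0 (by omega)
          match a with
          | 0 =>
            refine mul_left_cancel₀ hq2 ?_
            have hf := f6 (m + 1) (by omega)
            have hg := g6 (m + 1) (by omega)
            have e2 : f 1 (m + 1) = g 1 (m + 1) := ihb (m + 1) (by omega) 1 (by omega)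
            linear_combination -hf + hg + l2 * e1 - ((q : ℂ) + 1) * e2
          | 1 =>
            refine mul_left_cancel₀ hqq ?_
            have hf := f2 (m + 1) (by omega)
            have hg := g2 (m + 1) (by omega)
            simp only [Nat.add_sub_cancel] at hf hg
            have e2 : f 0 m = g 0 m := ihb m (by omega) 0 (by omega)
            linear_combination -hf + hg + l1 * e1 - e2
          | (j + 2) =>
            rcases Nat.lt_or_ge (j + 2) (m + 2) with hlt | hge
            · refine mul_left_cancel₀ hq2 ?_
              have hf := f4 (j + 1) (m + 1) (by omega) (by omega)
              have hg := g4 (j + 1) (m + 1) (by omega) (by omega)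
              simp only [Nat.add_sub_cancel] at hf hg
              have e2 : f (j + 1) (m + 1) = g (j + 1) (m + 1) :=
                ihb (m + 1) (by omega) (j + 1) (by omega)
              have e3 : f (j + 1) m = g (j + 1) m := ihb m (by omega) (j + 1) (by omega)
              have e4 : f j (m + 1) = g j (m + 1) := ihb (m + 1) (by omega) j (by omega)
              linear_combination -hf + hg + l1 * e2 - e3 - (q : ℂ) * e4
            · have hjm : j = m := by omega
              subst hjm
              refine mul_left_cancel₀ hq2 ?_
              have hf := f3 (j + 1) (by omega)
              have hg := g3 (j + 1) (by omega)
              simp only [Nat.add_sub_cancel] at hf hg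
              have e2 : f (j + 1) (j + 1) = g (j + 1) (j + 1) :=
                ihb (j + 1) (by omega) (j + 1) (by omega)
              have e3 : f j (j + 1) = g j (j + 1) := ihb (j + 1) (by omega) j (by omega)
              linear_combination -hf + hg + l1 * e2 - ((q : ℂ) + 1) * e3
    intro d1 d2 hd
    exact key d2 d1 hd
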